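/- Suppose |q_k(d) − q_k(d')| ≤ L·k^{-α} for one-coordinate changes with α > 1/2, D_k consists of k i.i.d. samples, and additionally the bias vanishes: E[q_k(D_k)] → p as k → ∞ for some real number p. Then q_k(D_k) → p almost surely. -/

import Mathlib

open MeasureTheory ProbabilityTheory Filter Real
open scoped ENNReal


lemma pfn_integrable_of_bdd {E : Type*} [MeasurableSpace E] {μ : Measure E} [IsFiniteMeasure μ]
    {f : E → ℝ} (hf : Measurable f) {B : ℝ} (hB : ∀ x, |f x| ≤ B) : Integrable f μ := by
  refine ⟨hf.aestronglyMeasurable, ?_⟩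
  exact HasFiniteIntegral.of_bounded (C := B) (ae_of_all _ hB)

lemma pfn_hoeffding_mgf {E : Type*} [MeasurableSpace E] (μ : Measure E) [IsProbabilityMeasure μ]
    {f : E → ℝ} (hf : Measurable f) {c : ℝ} (hc : 0 ≤ c) (hfc : ∀ x, |f x| ≤ c)
    (h0 : ∫ x, f x ∂μ = 0) (t : ℝ) :
    ∫ x, exp (t * f x) ∂μ ≤ exp (t ^ 2 * c ^ 2 / 2) := by
  rcases eq_or_lt_of_le hc with rfl | hcpos
  · have hf0 : ∀ x, f x = 0 := fun x => abs_nonpos_iff.mp (hfc x)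
    simp only [hf0, mul_zero, exp_zero, integral_const, measure_univ,
      ENNReal.toReal_one, probReal_univ, smul_eq_mul, one_mul]
    exact one_le_exp (by positivity)
  · -- pointwise bound: exp (t * f x) ≤ cosh (t*c) + (f x / c) * sinh (t*c)
    have key : ∀ x, exp (t * f x) ≤ cosh (t * c) + (f x / c) * sinh (t * c) := by
      intro x
      set s : ℝ := (c + f x) / (2 * c) with hs
      have h1 : 0 ≤ s := by
        apply div_nonneg _ (by linarith)
        have := (abs_le.mp (hfc x)).1; linarith
      have h2 : s ≤ 1 := by
        rw [div_le_one (by linarith)]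
        have := (abs_le.mp (hfc x)).2; linarith
      have hconv := convexOn_exp.2 (Set.mem_univ (-(t * c))) (Set.mem_univ (t * c))
        (by linarith : (0:ℝ) ≤ 1 - s) h1 (by ring : (1 - s) + s = 1)
      simp only [smul_eq_mul] at hconv
      have harg : (1 - s) * (-(t * c)) + s * (t * c) = t * f x := by
        rw [hs]; field_simp; ring
      rw [harg] at hconv
      refine hconv.trans_eq ?_
      rw [Real.cosh_eq, Real.sinh_eq, hs]
      have h2c : (2 : ℝ) * c ≠ 0 := by positivity
      field_simp
      ring
    have hint1 : Integrable (fun x => exp (t * f x)) μ := by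
      apply pfn_integrable_of_bdd (by fun_prop) (B := exp (|t| * c))
      intro x
      rw [abs_of_nonneg (exp_pos _).le, exp_le_exp]
      calc t * f x ≤ |t * f x| := le_abs_self _
        _ = |t| * |f x| := abs_mul _ _
        _ ≤ |t| * c := by gcongr; exact hfc x
    have hint2 : Integrable (fun x => cosh (t * c) + (f x / c) * sinh (t * c)) μ := by
      apply Integrable.add (integrable_const _)
      exact ((pfn_integrable_of_bdd hf hfc).div_const c).mul_const _
    calc ∫ x, exp (t * f x) ∂μ ≤ ∫ x, (cosh (t * c) + (f x / c) * sinh (t * c)) ∂μ :=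
          integral_mono hint1 hint2 key
      _ = cosh (t * c) := by
          rw [integral_add (integrable_const _)
            (((pfn_integrable_of_bdd hf hfc).div_const c).mul_const _),
            integral_const, integral_mul_const, integral_div, h0]
          simp
      _ ≤ exp ((t * c) ^ 2 / 2) := Real.cosh_le_exp_half_sq _
      _ = exp (t ^ 2 * c ^ 2 / 2) := by ring_nf


lemma pfn_mcdiarmid_mgf {D : Type*} [MeasurableSpace D] (P : Measure D) [IsProbabilityMeasure P]
    {c : ℝ} (hc : 0 ≤ c) :
    ∀ (n : ℕ) (f : (Fin n → D) → ℝ), Measurable f → (∀ d, f d ∈ Set.Icc (0:ℝ) 1) →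
    (∀ (i : Fin n) (d : Fin n → D) (x : D), |f (Function.update d i x) - f d| ≤ c) →
    ∀ t : ℝ, ∫ d, exp (t * (f d - ∫ d', f d' ∂(Measure.pi fun _ : Fin n => P)))
        ∂(Measure.pi fun _ : Fin n => P) ≤ exp (t ^ 2 * n * c ^ 2 / 2) := by
  intro n
  induction n with
  | zero =>
    intro f hfm hfr hbd t
    have hconst : ∀ d : Fin 0 → D, f d = f (fun i => i.elim0) := by
      intro d; congr 1; ext i; exact i.elim0
    simp only [hconst, integral_const, measure_univ, ENNReal.toReal_one, probReal_univ, one_smul,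
      sub_self, mul_zero, exp_zero, Nat.cast_zero, zero_mul, mul_zero, zero_div]
    exact le_refl 1
  | succ n IH =>
    intro f hfm hfr hbd t
    set Pn : Measure (Fin n → D) := Measure.pi (fun _ : Fin n => P) with hPn
    set Pn1 : Measure (Fin (n+1) → D) := Measure.pi (fun _ : Fin (n+1) => P) with hPn1
    set e := MeasurableEquiv.piFinSuccAbove (fun _ : Fin (n+1) => D) (Fin.last n) with he
    have mp : MeasurePreserving e Pn1 (P.prod Pn) := by
      have := measurePreserving_piFinSuccAbove (fun _ : Fin (n+1) => P) (Fin.last n)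
      exact this
    have hSymm : ∀ (y : D) (x : Fin n → D), e.symm (y, x) = Fin.snoc x y := by
      intro y x
      show (Fin.insertNthEquiv (fun _ => D) (Fin.last n)) (y, x) = Fin.snoc x y
      simp [Fin.insertNthEquiv, Fin.insertNth_last']
    -- transfer integrals to the product measure
    have hTrans : ∀ (F : (Fin (n+1) → D) → ℝ), Measurable F → (∀ d, |F d| ≤ exp |t|) →
        ∫ d, F d ∂Pn1 = ∫ x, ∫ y, F (Fin.snoc x y) ∂P ∂Pn := by
      intro F hFm hFb
      rw [← (mp.symm).integral_comp e.symm.measurableEmbedding F,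
        integral_prod_symm]
      · simp only [hSymm]
      · exact pfn_integrable_of_bdd (hFm.comp e.symm.measurable) (fun z => hFb _)
    have abs_integral_le_integral_abs_pfn : ∀ (h : D → ℝ),
        |∫ a, h a ∂P| ≤ ∫ a, |h a| ∂P := by
      intro h
      simpa only [Real.norm_eq_abs] using norm_integral_le_integral_norm (μ := P) h
    have hfb : ∀ d, |f d| ≤ 1 := fun d => abs_le.mpr ⟨by linarith [(hfr d).1], (hfr d).2⟩
    have hfS : Measurable fun z : D × (Fin n → D) => f (e.symm z) := hfm.comp e.symm.measurable
    set g : (Fin n → D) → ℝ := fun x => ∫ y, f (Fin.snoc x y) ∂P with hg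
    have hgeq : g = fun x => ∫ y, f (e.symm (y, x)) ∂P := by
      funext x; simp only [hg, hSymm]
    have hgm : Measurable g := by
      rw [hgeq]; exact hfS.stronglyMeasurable.integral_prod_left'.measurable
    have hrowm : ∀ x, Measurable fun y => f (Fin.snoc x y) := by
      intro x
      have hxy : (fun y => f (Fin.snoc x y)) = fun y => f (e.symm (y, x)) := by
        funext y; rw [hSymm]
      rw [hxy]
      exact hfm.comp (e.symm.measurable.comp (measurable_id.prodMk measurable_const))
    have hrowint : ∀ x, Integrable (fun y => f (Fin.snoc x y)) P :=
      fun x => pfn_integrable_of_bdd (hrowm x) (fun y => hfb _)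
    have hgr_all : ∀ x, g x ∈ Set.Icc (0:ℝ) 1 := by
      intro x
      constructor
      · exact integral_nonneg fun y => (hfr _).1
      · calc ∫ y, f (Fin.snoc x y) ∂P ≤ ∫ _y, (1:ℝ) ∂P :=
              integral_mono (hrowint x) (integrable_const 1) (fun y => (hfr _).2)
          _ = 1 := by simp
    set m := ∫ d, f d ∂Pn1 with hm
    have hm01 : m ∈ Set.Icc (0:ℝ) 1 := by
      constructor
      · exact integral_nonneg fun d => (hfr d).1
      · calc ∫ d, f d ∂Pn1 ≤ ∫ _d, (1:ℝ) ∂Pn1 :=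
              integral_mono (pfn_integrable_of_bdd hfm hfb) (integrable_const 1)
                (fun d => (hfr d).2)
          _ = 1 := by simp
    have hdiffb : ∀ d, |f d - m| ≤ 1 := by
      intro d
      rw [abs_le]
      constructor
      · linarith [(hfr d).1, hm01.2]
      · linarith [(hfr d).2, hm01.1]
    have hexpb : ∀ d, |exp (t * (f d - m))| ≤ exp |t| := by
      intro d
      rw [abs_of_nonneg (exp_pos _).le, exp_le_exp]
      calc t * (f d - m) ≤ |t * (f d - m)| := le_abs_self _
        _ = |t| * |f d - m| := abs_mul _ _
        _ ≤ |t| * 1 := by gcongr; exact hdiffb d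
        _ = |t| := mul_one _
    have hmg : ∫ x, g x ∂Pn = m := by
      rw [hm, hTrans f hfm (fun d => (hfb d).trans (one_le_exp (abs_nonneg t)))]
    have hgbd : ∀ (i : Fin n) (x : Fin n → D) (z : D), |g (Function.update x i z) - g x| ≤ c := by
      intro i x z
      have heq : ∀ y, f (Fin.snoc (Function.update x i z) y)
          = f (Function.update (Fin.snoc x y) i.castSucc z) := by
        intro y; rw [Fin.snoc_update]
      calc |g (Function.update x i z) - g x|
          = |∫ y, (f (Fin.snoc (Function.update x i z) y) - f (Fin.snoc x y)) ∂P| := by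
            rw [hg]; rw [integral_sub (hrowint _) (hrowint _)]
        _ ≤ ∫ y, |f (Fin.snoc (Function.update x i z) y) - f (Fin.snoc x y)| ∂P :=
            abs_integral_le_integral_abs_pfn _
        _ ≤ ∫ _y, c ∂P := by
            refine integral_mono ((hrowint _).sub (hrowint _)).abs (integrable_const c) ?_
            intro y; dsimp only; rw [heq y]; exact hbd _ _ _
        _ = c := by simp
    have hrow : ∀ x, ∫ y, exp (t * (f (Fin.snoc x y) - g x)) ∂P ≤ exp (t ^ 2 * c ^ 2 / 2) := by
      intro x
      apply pfn_hoeffding_mgf P (f := fun y => f (Fin.snoc x y) - g x) ((hrowm x).sub measurable_const) hc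
      · intro y
        have hrepr : f (Fin.snoc x y) - g x
            = ∫ y', (f (Fin.snoc x y) - f (Fin.snoc x y')) ∂P := by
          rw [integral_sub (integrable_const _) (hrowint x), integral_const]
          simp [hg]
        rw [hrepr]
        calc |∫ y', (f (Fin.snoc x y) - f (Fin.snoc x y')) ∂P|
            ≤ ∫ y', |f (Fin.snoc x y) - f (Fin.snoc x y')| ∂P := abs_integral_le_integral_abs_pfn _
          _ ≤ ∫ _y', c ∂P := by
              refine integral_mono ((integrable_const _).sub (hrowint x)).abs
                (integrable_const c) ?_
              intro y'
              have : f (Fin.snoc x y) = f (Function.update (Fin.snoc x y') (Fin.last n) y) := by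
                rw [Fin.update_snoc_last]
              rw [this]
              exact hbd _ _ _
          _ = c := by simp
      · rw [integral_sub (hrowint x) (integrable_const _), integral_const]
        simp [hg]
    -- inner factorization
    have hinner : ∀ x, ∫ y, exp (t * (f (Fin.snoc x y) - m)) ∂P
        = exp (t * (g x - m)) * ∫ y, exp (t * (f (Fin.snoc x y) - g x)) ∂P := by
      intro x
      rw [← integral_const_mul]
      congr 1; funext y
      rw [← exp_add]; ring_nf
    have hGint : Integrable (fun z : D × (Fin n → D) => exp (t * (f (e.symm z) - m)))
        (P.prod Pn) :=
      pfn_integrable_of_bdd ((((hfS.sub measurable_const).const_mul t).exp))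
        (fun z => hexpb _)
    have hint1 : Integrable (fun x => exp (t * (g x - m))
        * ∫ y, exp (t * (f (Fin.snoc x y) - g x)) ∂P) Pn := by
      have h1 : Integrable (fun x => ∫ y, exp (t * (f (e.symm (y, x)) - m)) ∂P) Pn :=
        hGint.integral_prod_right
      refine h1.congr (ae_of_all _ fun x => ?_)
      simp only [hSymm]
      exact hinner x
    have hint2 : Integrable (fun x => exp (t * (g x - m)) * exp (t ^ 2 * c ^ 2 / 2)) Pn := by
      refine (pfn_integrable_of_bdd
        (((hgm.sub measurable_const).const_mul t).exp) (B := exp |t|)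
        ?_).mul_const _
      intro x
      rw [abs_of_nonneg (exp_pos _).le, exp_le_exp]
      have hgd : |g x - m| ≤ 1 := by
        rw [abs_le]; constructor
        · linarith [(hgr_all x).1, hm01.2]
        · linarith [(hgr_all x).2, hm01.1]
      calc t * (g x - m) ≤ |t * (g x - m)| := le_abs_self _
        _ = |t| * |g x - m| := abs_mul _ _
        _ ≤ |t| * 1 := by gcongr
        _ = |t| := mul_one _
    calc ∫ d, exp (t * (f d - m)) ∂Pn1
        = ∫ x, ∫ y, exp (t * (f (Fin.snoc x y) - m)) ∂P ∂Pn :=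
          hTrans _ (((hfm.sub measurable_const).const_mul t).exp) hexpb
      _ = ∫ x, exp (t * (g x - m)) * ∫ y, exp (t * (f (Fin.snoc x y) - g x)) ∂P ∂Pn := by
          congr 1; funext x; exact hinner x
      _ ≤ ∫ x, exp (t * (g x - m)) * exp (t ^ 2 * c ^ 2 / 2) ∂Pn := by
          refine integral_mono hint1 hint2 fun x => ?_
          exact mul_le_mul_of_nonneg_left (hrow x) (exp_pos _).le
      _ = (∫ x, exp (t * (g x - m)) ∂Pn) * exp (t ^ 2 * c ^ 2 / 2) := integral_mul_const _ _
      _ ≤ exp (t ^ 2 * n * c ^ 2 / 2) * exp (t ^ 2 * c ^ 2 / 2) := by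
          have hIH := IH g hgm hgr_all hgbd t
          rw [hmg] at hIH
          exact mul_le_mul_of_nonneg_right hIH (exp_pos _).le
      _ = exp (t ^ 2 * (n + 1 : ℕ) * c ^ 2 / 2) := by
          rw [← exp_add]; congr 1; push_cast; ring


lemma pfn_tail {D : Type*} [MeasurableSpace D] (P : Measure D) [IsProbabilityMeasure P]
    {c ε : ℝ} (hc : 0 < c) (hε : 0 < ε) (n : ℕ) (hn : 1 ≤ n)
    (f : (Fin n → D) → ℝ) (hfm : Measurable f) (hfr : ∀ d, f d ∈ Set.Icc (0:ℝ) 1)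
    (hbd : ∀ (i : Fin n) (d : Fin n → D) (x : D), |f (Function.update d i x) - f d| ≤ c) :
    ((Measure.pi fun _ : Fin n => P)
        {d | ε ≤ |f d - ∫ d', f d' ∂(Measure.pi fun _ : Fin n => P)|}).toReal
      ≤ 2 * exp (-(ε ^ 2) / (2 * n * c ^ 2)) := by
  set μ := Measure.pi fun _ : Fin n => P with hμ
  set m := ∫ d', f d' ∂μ with hm
  have hfb : ∀ d, |f d| ≤ 1 := fun d => abs_le.mpr ⟨by linarith [(hfr d).1], (hfr d).2⟩
  have hm01 : m ∈ Set.Icc (0:ℝ) 1 := by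
    constructor
    · exact integral_nonneg fun d => (hfr d).1
    · calc ∫ d, f d ∂μ ≤ ∫ _d, (1:ℝ) ∂μ :=
            integral_mono (pfn_integrable_of_bdd hfm hfb) (integrable_const 1) (fun d => (hfr d).2)
        _ = 1 := by simp
  have hnpos : (0:ℝ) < n := by exact_mod_cast hn
  set t : ℝ := ε / (n * c ^ 2) with ht
  have htpos : 0 < t := div_pos hε (by positivity)
  have hexpeq : -t * ε + t ^ 2 * n * c ^ 2 / 2 = -(ε ^ 2) / (2 * n * c ^ 2) := by
    rw [ht]; field_simp; ring
  -- generic one-sided bound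
  have hside : ∀ (F : (Fin n → D) → ℝ), Measurable F → (∀ d, F d ∈ Set.Icc (0:ℝ) 1) →
      (∀ (i : Fin n) (d : Fin n → D) (x : D), |F (Function.update d i x) - F d| ≤ c) →
      (μ {d | ε ≤ F d - ∫ d', F d' ∂μ}).toReal ≤ exp (-(ε ^ 2) / (2 * n * c ^ 2)) := by
    intro F hFm hFr hFbd
    have hFb : ∀ d, |F d| ≤ 1 := fun d => abs_le.mpr ⟨by linarith [(hFr d).1], (hFr d).2⟩
    set mF := ∫ d', F d' ∂μ with hmF
    have hmF01 : mF ∈ Set.Icc (0:ℝ) 1 := by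
      constructor
      · exact integral_nonneg fun d => (hFr d).1
      · calc ∫ d, F d ∂μ ≤ ∫ _d, (1:ℝ) ∂μ :=
              integral_mono (pfn_integrable_of_bdd hFm hFb) (integrable_const 1)
                (fun d => (hFr d).2)
          _ = 1 := by simp
    have hint : Integrable (fun d => exp (t * (F d - mF))) μ := by
      apply pfn_integrable_of_bdd (((hFm.sub measurable_const).const_mul t).exp)
        (B := exp |t|)
      intro d
      rw [abs_of_nonneg (exp_pos _).le, exp_le_exp]
      calc t * (F d - mF) ≤ |t * (F d - mF)| := le_abs_self _
        _ = |t| * |F d - mF| := abs_mul _ _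
        _ ≤ |t| * 1 := by
            gcongr
            rw [abs_le]
            exact ⟨by linarith [(hFr d).1, hmF01.2], by linarith [(hFr d).2, hmF01.1]⟩
        _ = |t| := mul_one _
    have hcher := measure_ge_le_exp_mul_mgf (μ := μ) (X := fun d => F d - mF) ε htpos.le hint
    have hmgf : mgf (fun d => F d - mF) μ t ≤ exp (t ^ 2 * n * c ^ 2 / 2) :=
      pfn_mcdiarmid_mgf P hc.le n F hFm hFr hFbd t
    calc (μ {d | ε ≤ F d - mF}).toReal ≤ exp (-t * ε) * mgf (fun d => F d - mF) μ t := hcher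
      _ ≤ exp (-t * ε) * exp (t ^ 2 * n * c ^ 2 / 2) := by
          exact mul_le_mul_of_nonneg_left hmgf (exp_pos _).le
      _ = exp (-(ε ^ 2) / (2 * n * c ^ 2)) := by rw [← exp_add, hexpeq]
  -- combine the two sides
  have hsub : {d | ε ≤ |f d - m|} ⊆ {d | ε ≤ f d - m} ∪ {d | ε ≤ m - f d} := by
    intro d hd
    rw [Set.mem_setOf_eq] at hd
    rcases le_abs.mp hd with h | h
    · exact Or.inl h
    · exact Or.inr (by simpa using h)
  have hA : MeasurableSet {d | ε ≤ f d - m} :=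
    measurableSet_le measurable_const (hfm.sub measurable_const)
  have hB : MeasurableSet {d | ε ≤ m - f d} :=
    measurableSet_le measurable_const (measurable_const.sub hfm)
  have hmeas_le : μ {d | ε ≤ |f d - m|} ≤ μ {d | ε ≤ f d - m} + μ {d | ε ≤ m - f d} :=
    (measure_mono hsub).trans (measure_union_le _ _)
  have h1 : (μ {d | ε ≤ |f d - m|}).toReal
      ≤ (μ {d | ε ≤ f d - m}).toReal + (μ {d | ε ≤ m - f d}).toReal := by
    rw [← ENNReal.toReal_add (measure_ne_top _ _) (measure_ne_top _ _)]
    exact ENNReal.toReal_mono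
      (ENNReal.add_ne_top.mpr ⟨measure_ne_top _ _, measure_ne_top _ _⟩) hmeas_le
  have hfst : (μ {d | ε ≤ f d - m}).toReal ≤ exp (-(ε ^ 2) / (2 * n * c ^ 2)) :=
    hside f hfm hfr hbd
  have hsnd : (μ {d | ε ≤ m - f d}).toReal ≤ exp (-(ε ^ 2) / (2 * n * c ^ 2)) := by
    have h2 := hside (fun d => 1 - f d) (measurable_const.sub hfm)
      (fun d => Set.mem_Icc.mpr ⟨show (0:ℝ) ≤ 1 - f d by linarith [(hfr d).2],
        show (1:ℝ) - f d ≤ 1 by linarith [(hfr d).1]⟩)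
      (fun i d x => by
        simpa only [sub_sub_sub_cancel_left, abs_sub_comm] using hbd i d x)
    have hmeanF : ∫ d', (1 - f d') ∂μ = 1 - m := by
      rw [integral_sub (integrable_const 1) (pfn_integrable_of_bdd hfm hfb)]
      simp [hm]
    rw [hmeanF] at h2
    have : {d | ε ≤ (1 - f d) - (1 - m)} = {d | ε ≤ m - f d} := by
      ext d; simp only [Set.mem_setOf_eq]; constructor <;> intro h <;> linarith
    rwa [this] at h2
  linarith



set_option maxHeartbeats 1000000 in
lemma pfn_summable {a β : ℝ} (ha : 0 < a) (hβ : 0 < β) :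
    Summable (fun k : ℕ => Real.exp (-(a * (k : ℝ) ^ β))) := by
  have hlog := Asymptotics.isLittleO_iff.mp (isLittleO_log_rpow_atTop hβ)
    (by positivity : (0:ℝ) < a / 2)
  rw [Filter.eventually_atTop] at hlog
  obtain ⟨N, hN⟩ := hlog
  obtain ⟨M, hM⟩ := exists_nat_ge (max N 1)
  have key : ∀ k : ℕ, M ≤ k → Real.exp (-(a * (k : ℝ) ^ β)) ≤ 1 / (k : ℝ) ^ 2 := by
    intro k hk
    have hk1 : (1:ℝ) ≤ (k:ℝ) := by
      have : (M:ℝ) ≤ (k:ℝ) := by exact_mod_cast hk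
      calc (1:ℝ) ≤ max N 1 := le_max_right _ _
        _ ≤ M := hM
        _ ≤ k := this
    have hkN : N ≤ (k:ℝ) := le_trans (le_max_left _ _) (hM.trans (by exact_mod_cast hk))
    have hlogk := hN (k:ℝ) hkN
    rw [Real.norm_eq_abs, Real.norm_eq_abs, abs_of_nonneg (Real.log_nonneg hk1),
      abs_of_nonneg (Real.rpow_nonneg (by linarith) β)] at hlogk
    have h2 : 2 * Real.log k ≤ a * (k:ℝ) ^ β := by nlinarith
    calc Real.exp (-(a * (k : ℝ) ^ β)) ≤ Real.exp (-(2 * Real.log k)) := by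
          rw [exp_le_exp]; linarith
      _ = 1 / (k:ℝ) ^ 2 := by
          rw [Real.exp_neg, mul_comm (2:ℝ), Real.exp_mul, Real.exp_log (by linarith : (0:ℝ) < k),
            one_div]
          norm_num [Real.rpow_natCast]
  refine (summable_nat_add_iff M).mp ?_
  refine Summable.of_nonneg_of_le (fun n => (Real.exp_pos _).le)
    (fun n => key (n + M) (Nat.le_add_left _ _)) ?_
  exact (summable_nat_add_iff M).mpr (summable_one_div_nat_pow.mpr (by norm_num))


lemma pfn_map_pi {Ω : Type*} [MeasureSpace Ω] [IsProbabilityMeasure (ℙ : Measure Ω)]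
    {D : Type*} [MeasurableSpace D] (P : Measure D) [IsProbabilityMeasure P]
    (X : ℕ → Ω → D)
    (hXindep : iIndepFun X ℙ)
    (hXmeas : ∀ i, Measurable (X i))
    (hXdist : ∀ i, Measure.map (X i) ℙ = P) (k : ℕ) :
    Measure.map (fun ω => fun i : Fin k => X i ω) ℙ = Measure.pi fun _ : Fin k => P := by
  classical
  refine (Measure.pi_eq fun s hs => ?_).symm
  have hvec : Measurable (fun ω => fun i : Fin k => X i ω) :=
    measurable_pi_lambda _ fun i => hXmeas i
  rw [Measure.map_apply hvec (MeasurableSet.univ_pi hs)]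
  set s' : ℕ → Set D := fun n => if h : n < k then s ⟨n, h⟩ else Set.univ with hs'
  have hs'meas : ∀ n, MeasurableSet (s' n) := by
    intro n; rw [hs']; dsimp only
    split
    · exact hs _
    · exact MeasurableSet.univ
  have hpre : (fun ω => fun i : Fin k => X i ω) ⁻¹' Set.univ.pi s
      = ⋂ n ∈ Finset.range k, X n ⁻¹' s' n := by
    ext ω
    simp only [Set.mem_preimage, Set.mem_pi, Set.mem_univ, forall_true_left, Set.mem_iInter,
      Finset.mem_range, hs', Set.mem_preimage, true_implies]
    constructor
    · intro h n hn
      rw [dif_pos hn]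
      exact h ⟨n, hn⟩
    · intro h i
      have := h i.1 i.2
      rwa [dif_pos i.2] at this
  rw [hpre, hXindep.measure_inter_preimage_eq_mul (Finset.range k)
    (fun n _ => hs'meas n)]
  have hterm : ∀ n, ℙ (X n ⁻¹' s' n) = P (s' n) := by
    intro n
    rw [← hXdist n, Measure.map_apply (hXmeas n) (hs'meas n)]
  calc ∏ n ∈ Finset.range k, ℙ (X n ⁻¹' s' n)
      = ∏ n ∈ Finset.range k, P (s' n) := Finset.prod_congr rfl fun n _ => hterm n
    _ = ∏ i : Fin k, P (s' i) := (Fin.prod_univ_eq_prod_range (fun n => P (s' n)) k).symm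
    _ = ∏ i : Fin k, P (s i) := by
        refine Finset.prod_congr rfl fun i _ => ?_
        congr 1
        rw [hs']
        dsimp only
        rw [dif_pos i.isLt]

/-- Consistency of the PFN predictor: bounded differences with bound `L * k^(-α)`,
`α > 1/2`, i.i.d. samples, and vanishing bias `E[q k D_k] → p` together imply
`q k D_k → p` almost surely. -/
theorem pfn_consistency
    {Ω : Type*} [MeasureSpace Ω] [IsProbabilityMeasure (ℙ : Measure Ω)]
    {D : Type*} [MeasurableSpace D] (P : Measure D) [IsProbabilityMeasure P]
    (α L : ℝ) (hα : 1 / 2 < α) (hL : 0 ≤ L)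
    (X : ℕ → Ω → D)
    (hXindep : iIndepFun X ℙ)
    (hXmeas : ∀ i, Measurable (X i))
    (hXdist : ∀ i, Measure.map (X i) ℙ = P)
    (q : (k : ℕ) → (Fin k → D) → ℝ)
    (hqmeas : ∀ k, Measurable (q k))
    (hqrange : ∀ k (d : Fin k → D), q k d ∈ Set.Icc (0 : ℝ) 1)
    (hbd : ∀ (k : ℕ), 1 ≤ k → ∀ (i : Fin k) (d : Fin k → D) (x : D),
      |q k (Function.update d i x) - q k d| ≤ L * (k : ℝ) ^ (-α))
    (p : ℝ)
    (hbias : Filter.Tendsto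
      (fun k => ∫ ω, q k (fun i : Fin k => X i ω) ∂ℙ) Filter.atTop (nhds p)) :
    ∀ᵐ ω ∂ℙ, Filter.Tendsto (fun k => q k (fun i : Fin k => X i ω))
      Filter.atTop (nhds p) := by
  classical
  have hvecm : ∀ k, Measurable (fun ω => fun i : Fin k => X i ω) :=
    fun k => measurable_pi_lambda _ fun i => hXmeas i
  have hmap : ∀ k, Measure.map (fun ω => fun i : Fin k => X i ω) ℙ
      = Measure.pi fun _ : Fin k => P := pfn_map_pi P X hXindep hXmeas hXdist
  set m : ℕ → ℝ := fun k => ∫ ω, q k (fun i : Fin k => X i ω) ∂ℙ with hm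
  have hmean : ∀ k, m k = ∫ d, q k d ∂(Measure.pi fun _ : Fin k => P) := by
    intro k
    rw [← hmap k, integral_map (hvecm k).aemeasurable (hqmeas k).aestronglyMeasurable]
  set β : ℝ := 2 * α - 1 with hβ
  have hβpos : 0 < β := by rw [hβ]; linarith
  have main : ∀ j : ℕ, ∀ᵐ ω ∂ℙ, ∀ᶠ k in atTop,
      |q k (fun i : Fin k => X i ω) - m k| < 1 / (j + 1 : ℝ) := by
    intro j
    set ε : ℝ := 1 / (j + 1 : ℝ) with hεdef
    have hε : 0 < ε := by positivity
    set a : ℝ := ε ^ 2 / (2 * (L + 1) ^ 2) with ha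
    have hapos : 0 < a := by positivity
    set S : ℕ → Set Ω := fun k => {ω | ε ≤ |q k (fun i : Fin k => X i ω) - m k|} with hS
    have hTmeas : ∀ k, MeasurableSet {d : Fin k → D | ε ≤ |q k d - m k|} :=
      fun k => measurableSet_le measurable_const ((hqmeas k).sub measurable_const).abs
    have hSm : ∀ k, ℙ (S k)
        = (Measure.pi fun _ : Fin k => P) {d : Fin k → D | ε ≤ |q k d - m k|} := by
      intro k
      rw [← hmap k, Measure.map_apply (hvecm k) (hTmeas k)]
      rfl
    have htail : ∀ k : ℕ, 1 ≤ k →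
        (ℙ (S k)).toReal ≤ 2 * exp (-(a * (k : ℝ) ^ β)) := by
      intro k hk
      have hkpos : (0:ℝ) < (k:ℝ) := by exact_mod_cast hk
      set c : ℝ := (L + 1) * (k : ℝ) ^ (-α) with hc
      have hrpos : (0:ℝ) < (k : ℝ) ^ (-α) := Real.rpow_pos_of_pos hkpos _
      have hcpos : 0 < c := by positivity
      have hbd' : ∀ (i : Fin k) (d : Fin k → D) (x : D),
          |q k (Function.update d i x) - q k d| ≤ c := by
        intro i d x
        refine (hbd k hk i d x).trans ?_
        rw [hc]
        gcongr
        linarith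
      have hexp : -(ε ^ 2) / (2 * k * c ^ 2) = -(a * (k : ℝ) ^ β) := by
        have h1 : c ^ 2 = (L + 1) ^ 2 * (k : ℝ) ^ (-(2 * α)) := by
          rw [hc, mul_pow, ← Real.rpow_natCast ((k:ℝ) ^ (-α)) 2, ← Real.rpow_mul hkpos.le]
          congr 1
          push_cast; ring
        have h2 : (k : ℝ) * (k : ℝ) ^ (-(2 * α)) = ((k : ℝ) ^ β)⁻¹ := by
          have h2a : (k : ℝ) * (k : ℝ) ^ (-(2 * α)) = (k : ℝ) ^ (1 + -(2 * α)) := by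
            rw [Real.rpow_add hkpos, Real.rpow_one]
          rw [h2a, ← Real.rpow_neg hkpos.le]
          congr 1
          rw [hβ]; ring
        have hkβ : (0:ℝ) < (k : ℝ) ^ β := Real.rpow_pos_of_pos hkpos _
        rw [h1]
        have : 2 * (k:ℝ) * ((L + 1) ^ 2 * (k : ℝ) ^ (-(2 * α)))
            = 2 * (L + 1) ^ 2 * ((k : ℝ) ^ β)⁻¹ := by
          rw [← h2]; ring
        rw [this, ha]
        field_simp
      have := pfn_tail P hcpos hε k hk (q k) (hqmeas k) (hqrange k) hbd'
      rw [← hmean k] at this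
      rw [hSm k]
      rw [hexp] at this
      exact this
    have hsum : (∑' k, ℙ (S k)) ≠ ⊤ := by
      have hsummable : Summable (fun k : ℕ => 2 * Real.exp (-(a * (k : ℝ) ^ β))) :=
        (pfn_summable hapos hβpos).mul_left 2
      have hle : ∀ k, ℙ (S k) ≤ (if k = 0 then 1 else 0)
          + ENNReal.ofReal (2 * Real.exp (-(a * (k : ℝ) ^ β))) := by
        intro k
        rcases Nat.eq_zero_or_pos k with rfl | hk
        · simp only [if_pos rfl]
          calc ℙ (S 0) ≤ 1 := prob_le_one
            _ ≤ 1 + _ := le_self_add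
        · rw [if_neg (Nat.pos_iff_ne_zero.mp hk), zero_add]
          refine (ENNReal.le_ofReal_iff_toReal_le (measure_ne_top _ _) (by positivity)).mpr ?_
          exact htail k hk
      have hb : (∑' k, ℙ (S k))
          ≤ 1 + ENNReal.ofReal (∑' k : ℕ, 2 * Real.exp (-(a * (k : ℝ) ^ β))) := by
        calc (∑' k, ℙ (S k))
            ≤ ∑' k : ℕ, ((if k = 0 then 1 else 0)
              + ENNReal.ofReal (2 * Real.exp (-(a * (k : ℝ) ^ β)))) := ENNReal.tsum_le_tsum hle
          _ = (∑' k : ℕ, (if k = 0 then (1:ℝ≥0∞) else 0))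
              + ∑' k : ℕ, ENNReal.ofReal (2 * Real.exp (-(a * (k : ℝ) ^ β))) := ENNReal.tsum_add
          _ = 1 + ENNReal.ofReal (∑' k : ℕ, 2 * Real.exp (-(a * (k : ℝ) ^ β))) := by
              rw [tsum_ite_eq, ENNReal.ofReal_tsum_of_nonneg (fun k => by positivity) hsummable]
      exact (hb.trans_lt (ENNReal.add_lt_top.mpr
        ⟨ENNReal.one_lt_top, ENNReal.ofReal_lt_top⟩)).ne
    filter_upwards [ae_eventually_notMem hsum] with ω hω
    refine hω.mono fun k hk => ?_
    rw [hS, Set.mem_setOf_eq] at hk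
    exact not_le.mp hk
  filter_upwards [ae_all_iff.mpr main] with ω hω
  have hdiff : Tendsto (fun k => q k (fun i : Fin k => X i ω) - m k) atTop (nhds 0) := by
    rw [NormedAddCommGroup.tendsto_nhds_zero]
    intro ε hεpos
    obtain ⟨j, hj⟩ := exists_nat_one_div_lt hεpos
    refine (hω j).mono fun k hk => ?_
    rw [Real.norm_eq_abs]
    exact hk.trans hj
  have heq : (fun k => q k (fun i : Fin k => X i ω))
      = fun k => (q k (fun i : Fin k => X i ω) - m k) + m k := by
    funext k; ring
  rw [heq]
  simpa using hdiff.add hbias
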